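/- There is a constant C > 0, depending only on d and s, such that for every locally finite Borel measure ν on ℝ^d, every x ∈ ℝ^d, and all r, R > 0, one has ∫_{B(x,r)} ∫_{B(y,R)} |z−y|^{−s} dν(z) dm_d(y) ≤ C · min(r,R)^{d−s} · ν(B(x, r+R)), where m_d is d-dimensional Lebesgue measure. -/

import Mathlib

open MeasureTheory Metric Set

lemma rpow_key (s ρ : ℝ) (hρ : 0 < ρ) (d : ℕ) (k : ℕ) :
    ((ρ * 2 ^ (-((k:ℝ)+1))) ^ s)⁻¹ * (ρ * 2 ^ (-(k:ℝ))) ^ (d:ℕ)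
      = (ρ ^ ((d:ℝ) - s) * 2 ^ s) * ((2:ℝ) ^ (s - (d:ℝ))) ^ k := by
  have h2 : (0:ℝ) < 2 := by norm_num
  have hb : (0:ℝ) < ρ * 2 ^ (-((k:ℝ)+1)) := by positivity
  rw [← Real.rpow_neg hb.le, ← Real.rpow_natCast (ρ * 2 ^ (-(k:ℝ))) d,
    ← Real.rpow_natCast ((2:ℝ) ^ (s - (d:ℝ))) k, ← Real.rpow_mul h2.le,
    Real.mul_rpow hρ.le (Real.rpow_nonneg h2.le _),
    Real.mul_rpow hρ.le (Real.rpow_nonneg h2.le _),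
    ← Real.rpow_mul h2.le, ← Real.rpow_mul h2.le]
  rw [show (ρ ^ (-s) * 2 ^ (-((k:ℝ)+1) * -s)) * (ρ ^ ((d:ℝ)) * 2 ^ (-(k:ℝ) * (d:ℝ)))
      = (ρ ^ (-s) * ρ ^ ((d:ℝ))) * (2 ^ (-((k:ℝ)+1) * -s) * 2 ^ (-(k:ℝ) * (d:ℝ))) by ring,
    ← Real.rpow_add hρ, ← Real.rpow_add h2]
  rw [mul_assoc, ← Real.rpow_add h2]
  congr 1
  · congr 1; ring
  · congr 1; ring

lemma lemA (d : ℕ) (hd : 2 ≤ d) (s : ℝ) (hs : 0 < s) (hsd : s < d) :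
    ∃ K : ENNReal, K ≠ ⊤ ∧ ∀ (z : EuclideanSpace ℝ (Fin d)) (ρ : ℝ), 0 < ρ →
      ∫⁻ y in ball z ρ, ENNReal.ofReal ((‖z - y‖ ^ s)⁻¹) ∂volume
        ≤ K * ENNReal.ofReal (ρ ^ ((d : ℝ) - s)) := by
  set E := EuclideanSpace ℝ (Fin d)
  haveI : Nontrivial E := by
    have : 0 < Module.finrank ℝ E := by
      rw [finrank_euclideanSpace_fin]; omega
    exact Module.nontrivial_of_finrank_pos this
  set v : ENNReal := volume (ball (0:E) 1) with hv
  have hvne : v ≠ ⊤ := measure_ball_lt_top.ne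
  set q : ENNReal := ENNReal.ofReal ((2:ℝ) ^ (s - (d:ℝ))) with hq
  have hqlt : q < 1 := by
    rw [hq, ← ENNReal.ofReal_one]
    exact ENNReal.ofReal_lt_ofReal_iff_of_nonneg (Real.rpow_nonneg (by norm_num) _) |>.2
      (Real.rpow_lt_one_of_one_lt_of_neg (by norm_num) (by linarith))
  refine ⟨ENNReal.ofReal ((2:ℝ) ^ s) * v * (1 - q)⁻¹, ?_, ?_⟩
  · refine ENNReal.mul_ne_top (ENNReal.mul_ne_top ENNReal.ofReal_ne_top hvne) ?_
    simp [ENNReal.inv_ne_top, tsub_eq_zero_iff_le, hqlt.not_ge]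
  intro z ρ hρ
  -- dyadic radii
  set r : ℕ → ℝ := fun k => ρ * 2 ^ (-(k:ℝ)) with hr
  have hrpos : ∀ k, 0 < r k := fun k => by positivity
  have hrsucc : ∀ k : ℕ, r (k+1) = ρ * 2 ^ (-((k:ℝ)+1)) := by
    intro k; rw [hr]; push_cast; ring_nf
  have hrmono : ∀ k, r (k+1) < r k := by
    intro k
    rw [hrsucc]
    apply mul_lt_mul_of_pos_left _ hρ
    apply Real.rpow_lt_rpow_left_iff (by norm_num : (1:ℝ) < 2) |>.2
    push_cast; linarith
  -- covering
  have hcover : ball z ρ ⊆ {z} ∪ ⋃ k : ℕ, (ball z (r k) \ ball z (r (k+1))) := by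
    intro y hy
    rcases eq_or_ne y z with h | h
    · left; simp [h]
    · right
      have hdpos : 0 < dist y z := dist_pos.2 h
      have hex : ∃ n : ℕ, r n ≤ dist y z := by
        obtain ⟨n, hn⟩ := exists_pow_lt_of_lt_one (div_pos hdpos hρ) (by norm_num : (1:ℝ)/2 < 1)
        refine ⟨n, ?_⟩
        have h2n : (2:ℝ) ^ (-(n:ℝ)) = ((1:ℝ)/2) ^ n := by
          rw [Real.rpow_neg (by norm_num), Real.rpow_natCast]; simp
        rw [hr]; dsimp only
        rw [h2n]
        calc ρ * ((1:ℝ)/2) ^ n ≤ ρ * (dist y z / ρ) := by nlinarith [hn]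
        _ = dist y z := by field_simp
      classical
      set n := Nat.find hex with hn
      have hnspec : r n ≤ dist y z := Nat.find_spec hex
      have hn0 : n ≠ 0 := by
        intro h0
        rw [h0] at hnspec
        simp [hr] at hnspec
        rw [mem_ball] at hy
        linarith
      obtain ⟨k, hk⟩ : ∃ k, n = k + 1 := ⟨n - 1, by omega⟩
      refine mem_iUnion.2 ⟨k, ?_, ?_⟩
      · have hmin := Nat.find_min hex (m := k) (by omega)
        rw [mem_ball]
        push_neg at hmin
        exact hmin
      · rw [mem_ball, not_lt, ← hk]
        exact hnspec
  have hAk : ∀ k : ℕ,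
      ∫⁻ y in ball z (r k) \ ball z (r (k+1)), ENNReal.ofReal ((‖z - y‖ ^ s)⁻¹) ∂volume
      ≤ (ENNReal.ofReal ((2:ℝ)^s) * v * ENNReal.ofReal (ρ ^ ((d:ℝ)-s))) * q ^ k := by
    intro k
    have hptwise : ∀ y ∈ ball z (r k) \ ball z (r (k+1)),
        ENNReal.ofReal ((‖z - y‖ ^ s)⁻¹) ≤ ENNReal.ofReal ((r (k+1) ^ s)⁻¹) := by
      intro y hy
      apply ENNReal.ofReal_le_ofReal
      have hd1 : r (k+1) ≤ ‖z - y‖ := by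
        have := hy.2
        rw [mem_ball, not_lt] at this
        rwa [← dist_eq_norm, dist_comm]
      have : r (k+1) ^ s ≤ ‖z - y‖ ^ s :=
        Real.rpow_le_rpow (hrpos _).le hd1 hs.le
      exact inv_anti₀ (Real.rpow_pos_of_pos (hrpos _) s) this
    calc ∫⁻ y in ball z (r k) \ ball z (r (k+1)), ENNReal.ofReal ((‖z - y‖ ^ s)⁻¹) ∂volume
        ≤ ∫⁻ _ in ball z (r k) \ ball z (r (k+1)), ENNReal.ofReal ((r (k+1) ^ s)⁻¹) ∂volume :=
          setLIntegral_mono' (measurableSet_ball.diff measurableSet_ball) hptwise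
      _ = ENNReal.ofReal ((r (k+1) ^ s)⁻¹) * volume (ball z (r k) \ ball z (r (k+1))) :=
          setLIntegral_const _ _
      _ ≤ ENNReal.ofReal ((r (k+1) ^ s)⁻¹) * volume (ball z (r k)) := by
          exact mul_le_mul_right (measure_mono diff_subset) _
      _ = ENNReal.ofReal ((r (k+1) ^ s)⁻¹) * (ENNReal.ofReal (r k ^ d) * v) := by
          rw [Measure.addHaar_ball volume z (hrpos k).le, finrank_euclideanSpace_fin]
      _ = ENNReal.ofReal ((r (k+1) ^ s)⁻¹ * r k ^ d) * v := by
          rw [ENNReal.ofReal_mul (by positivity), mul_assoc]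
      _ = (ENNReal.ofReal ((2:ℝ)^s) * v * ENNReal.ofReal (ρ ^ ((d:ℝ)-s))) * q ^ k := by
          rw [hrsucc k, hr]
          dsimp only
          rw [rpow_key s ρ hρ d k]
          rw [ENNReal.ofReal_mul (by positivity), ENNReal.ofReal_mul (by positivity),
            ENNReal.ofReal_pow (by positivity), hq]
          ring
  calc ∫⁻ y in ball z ρ, ENNReal.ofReal ((‖z - y‖ ^ s)⁻¹) ∂volume
      ≤ ∫⁻ y in {z} ∪ ⋃ k : ℕ, (ball z (r k) \ ball z (r (k+1))),
          ENNReal.ofReal ((‖z - y‖ ^ s)⁻¹) ∂volume := lintegral_mono_set hcover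
    _ ≤ (∫⁻ y in {z}, ENNReal.ofReal ((‖z - y‖ ^ s)⁻¹) ∂volume)
          + ∫⁻ y in ⋃ k : ℕ, (ball z (r k) \ ball z (r (k+1))),
              ENNReal.ofReal ((‖z - y‖ ^ s)⁻¹) ∂volume := lintegral_union_le _ _ _
    _ = ∫⁻ y in ⋃ k : ℕ, (ball z (r k) \ ball z (r (k+1))),
          ENNReal.ofReal ((‖z - y‖ ^ s)⁻¹) ∂volume := by
        rw [setLIntegral_measure_zero _ _ (measure_singleton z), zero_add]
    _ ≤ ∑' k : ℕ, ∫⁻ y in ball z (r k) \ ball z (r (k+1)),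
          ENNReal.ofReal ((‖z - y‖ ^ s)⁻¹) ∂volume := lintegral_iUnion_le _ _
    _ ≤ ∑' k : ℕ, (ENNReal.ofReal ((2:ℝ)^s) * v * ENNReal.ofReal (ρ ^ ((d:ℝ)-s))) * q ^ k :=
        ENNReal.tsum_le_tsum hAk
    _ = (ENNReal.ofReal ((2:ℝ)^s) * v * ENNReal.ofReal (ρ ^ ((d:ℝ)-s))) * (1 - q)⁻¹ := by
        rw [ENNReal.tsum_mul_left, ENNReal.tsum_geometric]
    _ = ENNReal.ofReal ((2:ℝ)^s) * v * (1 - q)⁻¹ * ENNReal.ofReal (ρ ^ ((d:ℝ)-s)) := by ring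

/-- There is a constant `C > 0`, depending only on `d` and `s`, such that for
every locally finite Borel measure `ν` on `ℝ^d`, every `x ∈ ℝ^d`, and all `r, R > 0`,
`∫_{B(x,r)} ∫_{B(y,R)} |z−y|^{−s} dν(z) dm_d(y) ≤ C · min(r,R)^{d−s} · ν(B(x, r+R))`. -/
theorem stmt0 (d : ℕ) (hd : 2 ≤ d) (s : ℝ) (hs : 0 < s) (hsd : s < d) :
    ∃ C : ℝ, 0 < C ∧
      ∀ (ν : Measure (EuclideanSpace ℝ (Fin d))) [IsLocallyFiniteMeasure ν]
        (x : EuclideanSpace ℝ (Fin d)) (r R : ℝ), 0 < r → 0 < R →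
        ∫⁻ y in ball x r, (∫⁻ z in ball y R, ENNReal.ofReal ((‖z - y‖ ^ s)⁻¹) ∂ν) ∂volume
          ≤ ENNReal.ofReal (C * min r R ^ ((d : ℝ) - s)) * ν (ball x (r + R)) := by
  classical
  set E := EuclideanSpace ℝ (Fin d) with hE
  haveI : Nontrivial E := by
    have : 0 < Module.finrank ℝ E := by
      rw [finrank_euclideanSpace_fin]; omega
    exact Module.nontrivial_of_finrank_pos this
  obtain ⟨K, hKne, hK⟩ := lemA d hd s hs hsd
  set v : ENNReal := volume (ball (0:E) 1) with hv
  have hvne : v ≠ ⊤ := measure_ball_lt_top.ne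
  set C : ℝ := (K + v).toReal + 1 with hC
  have hCpos : 0 < C := by positivity
  have hKvC : K + v ≤ ENNReal.ofReal C := by
    conv_lhs => rw [← ENNReal.ofReal_toReal (ENNReal.add_ne_top.2 ⟨hKne, hvne⟩)]
    exact ENNReal.ofReal_le_ofReal (by simp [hC])
  refine ⟨C, hCpos, ?_⟩
  intro ν _ x r R hr hR
  set m : ℝ := min r R with hm
  have hmpos : 0 < m := lt_min hr hR
  set f : E → E → ENNReal :=
    fun y z => if dist z y < R then ENNReal.ofReal ((‖z - y‖ ^ s)⁻¹) else 0 with hf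
  have h1 : ∀ y : E, ∫⁻ z in ball y R, ENNReal.ofReal ((‖z - y‖ ^ s)⁻¹) ∂ν
      = ∫⁻ z, f y z ∂ν := by
    intro y
    rw [← lintegral_indicator measurableSet_ball]
    congr 1
  have hfmeas : Measurable (Function.uncurry f) := by
    have : Function.uncurry f = fun p : E × E =>
        if dist p.2 p.1 < R then ENNReal.ofReal ((‖p.2 - p.1‖ ^ s)⁻¹) else 0 := rfl
    rw [this]
    apply Measurable.ite
    · exact measurableSet_lt
        (continuous_dist.comp (continuous_snd.prodMk continuous_fst)).measurable
        measurable_const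
    · exact ENNReal.measurable_ofReal.comp
        (((Real.continuous_rpow_const hs.le).comp
          (continuous_snd.sub continuous_fst).norm).measurable.inv)
    · exact measurable_const
  set B : ENNReal := (K + v) * ENNReal.ofReal (m ^ ((d:ℝ) - s)) with hB
  have hpt : ∀ z : E, ∫⁻ y in ball x r, f y z ∂volume
      ≤ (ball x (r + R)).indicator (fun _ => B) z := by
    intro z
    by_cases hz : z ∈ ball x (r + R)
    · rw [Set.indicator_of_mem hz]
      set g : E → ENNReal := fun y => ENNReal.ofReal ((‖z - y‖ ^ s)⁻¹) with hg
      have hfz : ∀ y : E, f y z = (ball z R).indicator g y := by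
        intro y
        simp [hf, hg, Set.indicator_apply, mem_ball, dist_comm]
      have step1 : ∫⁻ y in ball x r, f y z ∂volume
          = ∫⁻ y in ball z R ∩ ball x r, g y ∂volume := by
        simp_rw [hfz]
        rw [lintegral_indicator measurableSet_ball, Measure.restrict_restrict measurableSet_ball]
      rw [step1]
      have hsplit : ball z R ∩ ball x r
          ⊆ (ball z m) ∪ ((ball z R ∩ ball x r) \ ball z m) := by
        intro y hy
        by_cases hym : y ∈ ball z m
        · exact Or.inl hym
        · exact Or.inr ⟨hy, hym⟩
      calc ∫⁻ y in ball z R ∩ ball x r, g y ∂volume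
          ≤ ∫⁻ y in (ball z m) ∪ ((ball z R ∩ ball x r) \ ball z m), g y ∂volume :=
            lintegral_mono_set hsplit
        _ ≤ (∫⁻ y in ball z m, g y ∂volume)
            + ∫⁻ y in (ball z R ∩ ball x r) \ ball z m, g y ∂volume :=
            lintegral_union_le _ _ _
        _ ≤ K * ENNReal.ofReal (m ^ ((d:ℝ) - s))
            + v * ENNReal.ofReal (m ^ ((d:ℝ) - s)) := by
            refine add_le_add (hK z m hmpos) ?_
            have hgb : ∀ y ∈ (ball z R ∩ ball x r) \ ball z m,
                g y ≤ ENNReal.ofReal ((m ^ s)⁻¹) := by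
              intro y hy
              apply ENNReal.ofReal_le_ofReal
              have hd1 : m ≤ ‖z - y‖ := by
                have := hy.2
                rw [mem_ball, not_lt] at this
                rwa [← dist_eq_norm, dist_comm]
              exact inv_anti₀ (Real.rpow_pos_of_pos hmpos s)
                (Real.rpow_le_rpow hmpos.le hd1 hs.le)
            have hvol : volume ((ball z R ∩ ball x r) \ ball z m)
                ≤ ENNReal.ofReal (m ^ d) * v := by
              rcases le_total r R with hrR | hrR
              · have hmr : m = r := min_eq_left hrR
                calc volume ((ball z R ∩ ball x r) \ ball z m)
                    ≤ volume (ball x r) :=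
                      measure_mono (fun y hy => hy.1.2)
                  _ = ENNReal.ofReal (r ^ d) * v := by
                      rw [Measure.addHaar_ball volume x hr.le, finrank_euclideanSpace_fin]
                  _ = ENNReal.ofReal (m ^ d) * v := by rw [hmr]
              · have hmr : m = R := min_eq_right hrR
                calc volume ((ball z R ∩ ball x r) \ ball z m)
                    ≤ volume (ball z R) :=
                      measure_mono (fun y hy => hy.1.1)
                  _ = ENNReal.ofReal (R ^ d) * v := by
                      rw [Measure.addHaar_ball volume z hR.le, finrank_euclideanSpace_fin]
                  _ = ENNReal.ofReal (m ^ d) * v := by rw [hmr]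
            calc ∫⁻ y in (ball z R ∩ ball x r) \ ball z m, g y ∂volume
                ≤ ∫⁻ _ in (ball z R ∩ ball x r) \ ball z m,
                    ENNReal.ofReal ((m ^ s)⁻¹) ∂volume :=
                  setLIntegral_mono' ((measurableSet_ball.inter measurableSet_ball).diff
                    measurableSet_ball) hgb
              _ = ENNReal.ofReal ((m ^ s)⁻¹) * volume ((ball z R ∩ ball x r) \ ball z m) :=
                  setLIntegral_const _ _
              _ ≤ ENNReal.ofReal ((m ^ s)⁻¹) * (ENNReal.ofReal (m ^ d) * v) :=
                  mul_le_mul_right hvol _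
              _ = v * ENNReal.ofReal (m ^ ((d:ℝ) - s)) := by
                  rw [← mul_assoc, ← ENNReal.ofReal_mul (by positivity)]
                  rw [show ((m ^ s)⁻¹ * m ^ d : ℝ) = m ^ ((d:ℝ) - s) by
                    rw [← Real.rpow_natCast m d, ← Real.rpow_neg hmpos.le,
                      ← Real.rpow_add hmpos]
                    congr 1; ring]
                  ring
        _ = B := by rw [hB]; ring
    · rw [Set.indicator_of_notMem hz]
      have hzero : ∀ y ∈ ball x r, f y z = 0 := by
        intro y hy
        rw [hf]
        dsimp only
        rw [if_neg]
        intro hlt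
        rw [mem_ball, not_lt] at hz
        rw [mem_ball] at hy
        have := dist_triangle z y x
        linarith
      rw [setLIntegral_congr_fun measurableSet_ball hzero]
      simp
  calc ∫⁻ y in ball x r, (∫⁻ z in ball y R, ENNReal.ofReal ((‖z - y‖ ^ s)⁻¹) ∂ν) ∂volume
      = ∫⁻ y in ball x r, ∫⁻ z, f y z ∂ν ∂volume := by
        apply lintegral_congr
        intro y
        exact h1 y
    _ = ∫⁻ z, ∫⁻ y in ball x r, f y z ∂volume ∂ν :=
        lintegral_lintegral_swap hfmeas.aemeasurable
    _ ≤ ∫⁻ z, (ball x (r + R)).indicator (fun _ => B) z ∂ν := lintegral_mono hpt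
    _ = B * ν (ball x (r + R)) := by
        rw [lintegral_indicator measurableSet_ball, setLIntegral_const]
    _ ≤ ENNReal.ofReal (C * m ^ ((d:ℝ) - s)) * ν (ball x (r + R)) := by
        apply mul_le_mul_left
        rw [hB, ENNReal.ofReal_mul hCpos.le]
        exact mul_le_mul_left hKvC _
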